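/- (Deterministic core of Lemma 2) Let W ⊆ ℝ be an open interval, F : W → ℝ twice continuously differentiable, S a finite index set of cardinality n, x_i ∈ ℝ^p and c_i ∈ ℝ for i ∈ S, and X̄ ∈ ℝ^p. Set ν_i(λ) = c_i + x_i^⊤λ and suppose: (i) there exist r > 0 and c_g > 0 such that for all λ with ‖λ‖ ≤ r and all i ∈ S, ν_i(λ) ∈ W and F''(ν_i(λ)) ≥ c_g; (ii) the smallest eigenvalue of (1/n)Σ_{i∈S} x_i x_i^⊤ is at least c_x > 0. Write ω_i^{(0)} = F'(ν_i(0)) = F'(c_i). Then every λ̂ with ‖λ̂‖ ≤ r solving the calibration equation (1/n)Σ_{i∈S} F'(ν_i(λ̂)) x_i = X̄ satisfies ‖λ̂‖ ≤ (c_g c_x)^{-1} ‖(1/n)Σ_{i∈S} ω_i^{(0)} x_i − X̄‖. -/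

import Mathlib

open Finset
open scoped RealInnerProductSpace

/-- **deterministic core of Lemma 2.** With `νᵢ(λ) = cᵢ + xᵢᵀλ`,
`F` twice continuously differentiable on the open interval `W`, suppose
(i) for all `‖λ‖ ≤ r` and all `i`, `νᵢ(λ) ∈ W` and `F''(νᵢ(λ)) ≥ c_g > 0`; and
(ii) the smallest eigenvalue of `n⁻¹ Σᵢ xᵢ xᵢᵀ` is at least `c_x > 0` (stated as
`c_x‖v‖² ≤ n⁻¹ Σᵢ ⟪xᵢ, v⟫²` for all `v`). Writing `ωᵢ⁽⁰⁾ = F'(νᵢ(0)) = F'(cᵢ)`,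
every `λ̂` with `‖λ̂‖ ≤ r` solving the calibration equation
`n⁻¹ Σᵢ F'(νᵢ(λ̂)) xᵢ = X̄` satisfies
`‖λ̂‖ ≤ (c_g c_x)⁻¹ ‖n⁻¹ Σᵢ ωᵢ⁽⁰⁾ xᵢ − X̄‖`. -/
theorem lambda_hat_norm_bound {ι : Type*} [Fintype ι] (p : ℕ)
    (W : Set ℝ) (hWo : IsOpen W) (hWc : Convex ℝ W)
    (F f1 f2 : ℝ → ℝ)
    (hf1 : ∀ t ∈ W, HasDerivAt F (f1 t) t)
    (hf2 : ∀ t ∈ W, HasDerivAt f1 (f2 t) t)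
    (hf2c : ContinuousOn f2 W)
    (x : ι → EuclideanSpace ℝ (Fin p)) (c : ι → ℝ)
    (Xbar : EuclideanSpace ℝ (Fin p))
    (r cg cx : ℝ) (hr : 0 < r) (hcg : 0 < cg) (hcx : 0 < cx)
    (hlower : ∀ lam : EuclideanSpace ℝ (Fin p), ‖lam‖ ≤ r → ∀ i,
      c i + ⟪x i, lam⟫ ∈ W ∧ cg ≤ f2 (c i + ⟪x i, lam⟫))
    (heig : ∀ v : EuclideanSpace ℝ (Fin p),
      cx * ‖v‖ ^ 2 ≤ (Fintype.card ι : ℝ)⁻¹ * ∑ i, ⟪x i, v⟫ ^ 2) :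
    ∀ lamhat : EuclideanSpace ℝ (Fin p), ‖lamhat‖ ≤ r →
      ((Fintype.card ι : ℝ)⁻¹ • ∑ i, f1 (c i + ⟪x i, lamhat⟫) • x i = Xbar) →
      ‖lamhat‖ ≤ (cg * cx)⁻¹
        * ‖(Fintype.card ι : ℝ)⁻¹ • (∑ i, f1 (c i) • x i) - Xbar‖ := by
  intro lamhat hnorm hcal
  set a : ι → ℝ := fun i => ⟪x i, lamhat⟫ with ha
  -- mean value theorem per index
  have hmvt : ∀ i, ∃ d : ℝ, cg ≤ d ∧ f1 (c i + a i) - f1 (c i) = d * a i := by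
    intro i
    have hmem : ∀ s : ℝ, s ∈ Set.Icc (0:ℝ) 1 →
        c i + s * a i ∈ W ∧ cg ≤ f2 (c i + s * a i) := by
      intro s hs
      have hns : ‖s • lamhat‖ ≤ r := by
        rw [norm_smul, Real.norm_eq_abs, abs_of_nonneg hs.1]
        calc s * ‖lamhat‖ ≤ 1 * ‖lamhat‖ := by
              apply mul_le_mul_of_nonneg_right hs.2 (norm_nonneg _)
          _ = ‖lamhat‖ := one_mul _
          _ ≤ r := hnorm
      have h := hlower (s • lamhat) hns i
      rw [real_inner_smul_right] at h
      simpa [ha, mul_comm] using h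
    by_cases hai : a i = 0
    · exact ⟨cg, le_refl _, by simp [hai]⟩
    · set φ : ℝ → ℝ := fun s => f1 (c i + s * a i) with hφ
      have hderiv : ∀ s ∈ Set.Ioo (0:ℝ) 1,
          HasDerivAt φ (f2 (c i + s * a i) * a i) s := by
        intro s hs
        have h1 : HasDerivAt (fun s : ℝ => c i + s * a i) (a i) s := by
          simpa using (hasDerivAt_id s).mul_const (a i) |>.const_add (c i)
        have h2 := hf2 _ (hmem s (Set.mem_Icc_of_Ioo hs)).1
        exact h2.comp s h1
      have hcont : ContinuousOn φ (Set.Icc (0:ℝ) 1) := by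
        intro s hs
        have h1 : HasDerivAt (fun s : ℝ => c i + s * a i) (a i) s := by
          simpa using (hasDerivAt_id s).mul_const (a i) |>.const_add (c i)
        have h2 := hf2 _ (hmem s hs).1
        exact ((h2.comp s h1).continuousAt).continuousWithinAt
      obtain ⟨ξ, hξ, hres⟩ := exists_hasDerivAt_eq_slope φ
        (fun s => f2 (c i + s * a i) * a i) (by norm_num) hcont hderiv
      refine ⟨f2 (c i + ξ * a i), (hmem ξ (Set.mem_Icc_of_Ioo hξ)).2, ?_⟩
      have : f2 (c i + ξ * a i) * a i = f1 (c i + a i) - f1 (c i) := by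
        simpa [hφ, slope_def_field] using hres
      linarith [this]
  choose d hd hde using hmvt
  set n : ℝ := (Fintype.card ι : ℝ)⁻¹ with hn
  have hn0 : 0 ≤ n := by positivity
  have key : cg * cx * ‖lamhat‖ ^ 2 ≤ n * ∑ i, (f1 (c i + a i) - f1 (c i)) * a i := by
    have h1 : ∀ i, cg * a i ^ 2 ≤ (f1 (c i + a i) - f1 (c i)) * a i := by
      intro i
      rw [hde i]
      have : d i * a i * a i = d i * a i ^ 2 := by ring
      rw [this]
      exact mul_le_mul_of_nonneg_right (hd i) (sq_nonneg _)
    calc cg * cx * ‖lamhat‖ ^ 2 = cg * (cx * ‖lamhat‖ ^ 2) := by ring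
      _ ≤ cg * (n * ∑ i, a i ^ 2) := by
          apply mul_le_mul_of_nonneg_left (heig lamhat) hcg.le
      _ = n * ∑ i, cg * a i ^ 2 := by
          simp only [Finset.mul_sum]
          exact Finset.sum_congr rfl fun i _ => by ring
      _ ≤ n * ∑ i, (f1 (c i + a i) - f1 (c i)) * a i := by
          apply mul_le_mul_of_nonneg_left _ hn0
          exact Finset.sum_le_sum fun i _ => h1 i
  set M : EuclideanSpace ℝ (Fin p) := n • (∑ i, f1 (c i) • x i) with hM
  have hinner : n * ∑ i, (f1 (c i + a i) - f1 (c i)) * a i = ⟪Xbar - M, lamhat⟫ := by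
    rw [← hcal, hM, ← smul_sub, real_inner_smul_left, ← Finset.sum_sub_distrib, sum_inner]
    congr 1
    apply Finset.sum_congr rfl
    intro i _
    rw [inner_sub_left, real_inner_smul_left, real_inner_smul_left]
    ring
  have hCS : ⟪Xbar - M, lamhat⟫ ≤ ‖M - Xbar‖ * ‖lamhat‖ := by
    calc ⟪Xbar - M, lamhat⟫ ≤ ‖Xbar - M‖ * ‖lamhat‖ := real_inner_le_norm _ _
      _ = ‖M - Xbar‖ * ‖lamhat‖ := by rw [norm_sub_rev]
  have hfinal : cg * cx * ‖lamhat‖ ^ 2 ≤ ‖M - Xbar‖ * ‖lamhat‖ := by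
    rw [hinner] at key; linarith
  rcases eq_or_lt_of_le (norm_nonneg lamhat) with h0 | h0
  · rw [← h0]; positivity
  · have hpos : 0 < cg * cx := mul_pos hcg hcx
    rw [inv_mul_eq_div, le_div_iff₀ hpos]
    nlinarith [hfinal, h0]
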